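/- arXiv:math/0401052 — 4 statements merged into one kernel-verified Lean document; each statement's English description precedes it below -/
import Mathlib

section
/- Every Z ∈ GL_m(ℂ[t^{±1},q^{±1}]) factors as Z = Z₀Z₁ with Z₀ ∈ GL_m(ℂ) (the evaluation of Z at t = α, q = β) and Z₁ ∈ L(α,β), and the conjugation action of Z on L(α,β)/L²(α,β) ≅ 𝔰𝔩_m(ℂ) × 𝔰𝔩_m(ℂ) is the diagonal action (v,w) ↦ (Z₀ v Z₀⁻¹, Z₀ w Z₀⁻¹). -/
open Matrix LaurentPolynomial

/-- The two-variable Laurent polynomial ring `ℂ[t^{±1}, q^{±1}]`. -/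
abbrev LaurentTwo : Type := LaurentPolynomial (LaurentPolynomial ℂ)

/-- The variable `t` in `ℂ[t^{±1}, q^{±1}]`. -/
noncomputable def tVar : LaurentTwo := LaurentPolynomial.C (LaurentPolynomial.T 1)

/-- The variable `q` in `ℂ[t^{±1}, q^{±1}]`. -/
noncomputable def qVar : LaurentTwo := LaurentPolynomial.T 1

/-- The inclusion of constants `ℂ → ℂ[t^{±1}, q^{±1}]`. -/
noncomputable def constC : ℂ →+* LaurentTwo :=
  LaurentPolynomial.C.comp LaurentPolynomial.C

noncomputable def lkbEvalLP {R : Type*} [CommSemiring R] (φ : R →+* ℂ) (a : ℂˣ) :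
    LaurentPolynomial R →+* ℂ :=
  AddMonoidAlgebra.liftNCRingHom φ ((Units.coeHom ℂ).comp (zpowersHom ℂˣ a))
    fun _ _ => Commute.all _ _

lemma lkbEvalLP_single {R : Type*} [CommSemiring R] (φ : R →+* ℂ) (a : ℂˣ) (n : ℤ) (r : R) :
    lkbEvalLP φ a (AddMonoidAlgebra.single n r) = φ r * ((a : ℂ) ^ n) := by
  show AddMonoidAlgebra.liftNC (φ : R →+ ℂ)
      (⇑((Units.coeHom ℂ).comp (zpowersHom ℂˣ a))) (AddMonoidAlgebra.single n r) = _
  erw [AddMonoidAlgebra.liftNC_single]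
  simp

lemma lkbEvalLP_C {R : Type*} [CommSemiring R] (φ : R →+* ℂ) (a : ℂˣ) (r : R) :
    lkbEvalLP φ a (LaurentPolynomial.C r) = φ r := by
  rw [← single_eq_C, lkbEvalLP_single]; simp

lemma lkbEvalLP_T {R : Type*} [CommSemiring R] (φ : R →+* ℂ) (a : ℂˣ) (n : ℤ) :
    lkbEvalLP φ a (LaurentPolynomial.T n) = (a : ℂ) ^ n := by
  rw [show (LaurentPolynomial.T n : LaurentPolynomial R) = AddMonoidAlgebra.single n 1 from rfl,
    lkbEvalLP_single]; simp

lemma lkb_hom_T_congr {R Q : Type*} [CommSemiring R] [CommRing Q]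
    (ψ : LaurentPolynomial R →+* Q) (v : Qˣ) (h1 : ψ (T 1) = v) :
    ∀ n : ℤ, ψ (T n) = ↑(v ^ n) := by
  have hinv : ψ (T (-1)) = ↑v⁻¹ := by
    have h : ψ (T (-1)) * ψ (T 1) = 1 := by
      rw [← _root_.map_mul, ← T_add]; norm_num
    rw [h1, mul_comm] at h
    exact Units.eq_inv_of_mul_eq_one_left h
  intro n
  induction n using Int.induction_on with
  | zero => simp
  | succ k ih =>
      rw [T_add, _root_.map_mul, ih, h1, ← Units.val_mul, ← _root_.zpow_add_one]
  | pred k ih =>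
      rw [show (T (-(k:ℤ) - 1) : LaurentPolynomial R) = T (-(k:ℤ)) * T (-1) by
          rw [← T_add]; congr 1,
        _root_.map_mul, ih, hinv, ← Units.val_mul, ← _root_.zpow_sub_one]

lemma lkb_key (α β : ℂ) (hα : α ≠ 0) (hβ : β ≠ 0) (J : Ideal LaurentTwo)
    (hJ : J = Ideal.span {tVar - constC α, qVar - constC β}) :
    ∃ ev : LaurentTwo →+* ℂ, ev.comp constC = RingHom.id ℂ ∧
      ∀ f : LaurentTwo, f - constC (ev f) ∈ J := by
  set evt : LaurentPolynomial ℂ →+* ℂ := lkbEvalLP (RingHom.id ℂ) (Units.mk0 α hα) with hevt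
  refine ⟨lkbEvalLP evt (Units.mk0 β hβ), ?_, ?_⟩
  · ext c
    simp [constC, lkbEvalLP_C, hevt]
  · have htj : tVar - constC α ∈ J := hJ ▸ Ideal.subset_span (by simp)
    have hqj : qVar - constC β ∈ J := hJ ▸ Ideal.subset_span (by simp)
    set π := Ideal.Quotient.mk J with hπ
    have hπt : π tVar = π (constC α) := (Ideal.Quotient.mk_eq_mk_iff_sub_mem _ _).mpr htj
    have hπq : π qVar = π (constC β) := (Ideal.Quotient.mk_eq_mk_iff_sub_mem _ _).mpr hqj
    set f : ℂ →+* LaurentTwo ⧸ J := π.comp constC with hf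
    have hconst_zpow : ∀ (γ : ℂ) (hγ : γ ≠ 0) (n : ℤ),
        π (constC (γ ^ n)) = ↑((Units.map f.toMonoidHom (Units.mk0 γ hγ)) ^ n) := by
      intro γ hγ n
      have h1 : γ ^ n = ((Units.mk0 γ hγ ^ n : ℂˣ) : ℂ) := by
        rw [Units.val_zpow_eq_zpow_val]; rfl
      calc π (constC (γ ^ n)) = f ↑(Units.mk0 γ hγ ^ n) := by rw [← h1]; rfl
        _ = ↑(Units.map f.toMonoidHom (Units.mk0 γ hγ ^ n)) := by
              rw [Units.coe_map]; rfl
        _ = ↑((Units.map f.toMonoidHom (Units.mk0 γ hγ)) ^ n) := by rw [map_zpow]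
    set Vα := Units.map f.toMonoidHom (Units.mk0 α hα) with hVα
    set Vβ := Units.map f.toMonoidHom (Units.mk0 β hβ) with hVβ
    have hCT : ∀ j : ℤ, π (LaurentPolynomial.C (T j)) = ↑(Vα ^ j) := by
      refine lkb_hom_T_congr (Q := LaurentTwo ⧸ J) (π.comp LaurentPolynomial.C) Vα ?_
      show π tVar = _
      rw [hπt, hVα, Units.coe_map]
      rfl
    have hT : ∀ n : ℤ, π (T n : LaurentTwo) = ↑(Vβ ^ n) := by
      refine lkb_hom_T_congr (Q := LaurentTwo ⧸ J) π Vβ ?_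
      show π qVar = _
      rw [hπq, hVβ, Units.coe_map]
      rfl
    intro p
    rw [← Ideal.Quotient.mk_eq_mk_iff_sub_mem]
    show π p = π (constC (lkbEvalLP evt (Units.mk0 β hβ) p))
    induction p using LaurentPolynomial.induction_on' with
    | add p q hp hq => rw [map_add, map_add, map_add, map_add, hp, hq]
    | C_mul_T n a =>
        rw [_root_.map_mul, _root_.map_mul, lkbEvalLP_C, lkbEvalLP_T, _root_.map_mul, _root_.map_mul, hT n,
          show ((Units.mk0 β hβ : ℂˣ) : ℂ) = β from rfl, hconst_zpow β hβ n]
        congr 1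
        -- π (C a) = π (constC (evt a))
        induction a using LaurentPolynomial.induction_on' with
        | add p q hp hq => rw [map_add, map_add, map_add, map_add, map_add, hp, hq]
        | C_mul_T j c =>
            rw [_root_.map_mul, _root_.map_mul, _root_.map_mul, hevt, lkbEvalLP_C, lkbEvalLP_T, _root_.map_mul, _root_.map_mul,
              hCT j, show ((Units.mk0 α hα : ℂˣ) : ℂ) = α from rfl, hconst_zpow α hα j]
            rfl

lemma lkb_entry_mul_mem {R : Type*} [CommRing R] {n : ℕ} {I I' : Ideal R}
    {M N : Matrix (Fin n) (Fin n) R} (hM : ∀ k l, M k l ∈ I) (hN : ∀ k l, N k l ∈ I') :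
    ∀ k l, (M * N) k l ∈ I * I' := by
  intro k l
  rw [Matrix.mul_apply]
  exact Ideal.sum_mem _ fun j _ => Ideal.mul_mem_mul (hM k j) (hN j l)

lemma lkb_entry_mul_left {R : Type*} [CommRing R] {n : ℕ} {I : Ideal R}
    (M : Matrix (Fin n) (Fin n) R) {N : Matrix (Fin n) (Fin n) R}
    (hN : ∀ k l, N k l ∈ I) : ∀ k l, (M * N) k l ∈ I := by
  intro k l
  rw [Matrix.mul_apply]
  exact Ideal.sum_mem _ fun j _ => Ideal.mul_mem_left _ _ (hN j l)

lemma lkb_entry_mul_right {R : Type*} [CommRing R] {n : ℕ} {I : Ideal R}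
    {M : Matrix (Fin n) (Fin n) R} (N : Matrix (Fin n) (Fin n) R)
    (hM : ∀ k l, M k l ∈ I) : ∀ k l, (M * N) k l ∈ I := by
  intro k l
  rw [Matrix.mul_apply]
  exact Ideal.sum_mem _ fun j _ => Ideal.mul_mem_right _ _ (hM k j)

set_option synthInstance.maxHeartbeats 1000000 in
lemma lkb_smul_conj {n : ℕ} (W Wi N : Matrix (Fin n) (Fin n) LaurentTwo) (c : LaurentTwo) :
    W * (c • N) * Wi = c • (W * N * Wi) := by
  rw [Matrix.mul_smul, Matrix.smul_mul]

lemma lkb_conj_identity {S : Type*} [Ring S] (Z W Winv Y E F : S) :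
    (Z * E * Y + 1) - 1 - W * F * Winv
      = (Z - W) * E * Y + W * E * (Y - Winv) + W * (E - F) * Winv := by
  noncomm_ring

/-- Every `Z ∈ GL_m(ℂ[t^{±1},q^{±1}])` factors as `Z = Z₀ Z₁` with
`Z₀ ∈ GL_m(ℂ)` and `Z₁ ≡ I mod (t-α, q-β)`, and the conjugation action of `Z` on
`L(α,β)/L²(α,β) ≅ 𝔰𝔩_m(ℂ) × 𝔰𝔩_m(ℂ)` is the diagonal action
`(A_t, A_q) ↦ (Z₀ A_t Z₀⁻¹, Z₀ A_q Z₀⁻¹)`. -/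
theorem lkb_conjugation_diagonal
    (m : ℕ) (hm : 1 ≤ m) (α β : ℂ) (hα : α ≠ 0) (hβ : β ≠ 0)
    (J : Ideal LaurentTwo)
    (hJ : J = Ideal.span {tVar - constC α, qVar - constC β})
    (Z : Matrix (Fin m) (Fin m) LaurentTwo) (hZ : IsUnit Z) :
    ∃ (Z₀ : Matrix (Fin m) (Fin m) ℂ) (Z₁ : Matrix (Fin m) (Fin m) LaurentTwo),
      IsUnit Z₀ ∧
      (∀ k l, (Z₁ - 1) k l ∈ J) ∧
      Z = Z₀.map constC * Z₁ ∧
      ∀ (A : Matrix.SpecialLinearGroup (Fin m) LaurentTwo)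
        (At Aq : Matrix (Fin m) (Fin m) ℂ),
        (∀ k l,
          (((A : Matrix.SpecialLinearGroup (Fin m) LaurentTwo) :
              Matrix (Fin m) (Fin m) LaurentTwo) - 1
            - (tVar - constC α) • At.map constC
            - (qVar - constC β) • Aq.map constC :
              Matrix (Fin m) (Fin m) LaurentTwo) k l ∈ J ^ 2) →
        (∀ k l,
          (Z * (A : Matrix (Fin m) (Fin m) LaurentTwo) * Z⁻¹ - 1
            - (tVar - constC α) • (Z₀ * At * Z₀⁻¹).map constC
            - (qVar - constC β) • (Z₀ * Aq * Z₀⁻¹).map constC :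
              Matrix (Fin m) (Fin m) LaurentTwo) k l ∈ J ^ 2) := by
  obtain ⟨ev, hev_comp, hev⟩ := lkb_key α β hα hβ J hJ
  have hevc : ∀ c : ℂ, ev (constC c) = c := fun c => RingHom.congr_fun hev_comp c
  have htj : tVar - constC α ∈ J := hJ ▸ Ideal.subset_span (by simp)
  have hqj : qVar - constC β ∈ J := hJ ▸ Ideal.subset_span (by simp)
  set Z₀ : Matrix (Fin m) (Fin m) ℂ := Z.map ev with hZ₀def
  have hdet : IsUnit Z.det := (Matrix.isUnit_iff_isUnit_det Z).mp hZ
  have hZ₀ : IsUnit Z₀ := by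
    rw [Matrix.isUnit_iff_isUnit_det, hZ₀def,
      show Z.map ⇑ev = ev.mapMatrix Z from rfl, ← RingHom.map_det]
    exact hdet.map ev
  have hdet₀ : IsUnit Z₀.det := (Matrix.isUnit_iff_isUnit_det Z₀).mp hZ₀
  set W : Matrix (Fin m) (Fin m) LaurentTwo := Z₀.map constC with hWdef
  have hdetW : IsUnit W.det := by
    rw [hWdef, show Z₀.map ⇑constC = constC.mapMatrix Z₀ from rfl, ← RingHom.map_det]
    exact hdet₀.map constC
  have hWW : W * W⁻¹ = 1 := Matrix.mul_nonsing_inv W hdetW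
  have hW'W : W⁻¹ * W = 1 := Matrix.nonsing_inv_mul W hdetW
  have hZY : Z * Z⁻¹ = 1 := Matrix.mul_nonsing_inv Z hdet
  have hYZ : Z⁻¹ * Z = 1 := Matrix.nonsing_inv_mul Z hdet
  -- generic entrywise congruence
  have sub_mem : ∀ (M : Matrix (Fin m) (Fin m) LaurentTwo) (N : Matrix (Fin m) (Fin m) ℂ),
      M.map ev = N → ∀ k l, (M - N.map constC) k l ∈ J := by
    intro M N h k l
    have h2 := hev (M k l)
    have h3 : N k l = ev (M k l) := by rw [← h]; rfl
    simpa [Matrix.sub_apply, Matrix.map_apply, h3] using h2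
  -- map-ev facts
  have hWev : W.map ev = Z₀ := by
    ext k l; simp [hWdef, Matrix.map_apply, hevc]
  have hconstev : ∀ N : Matrix (Fin m) (Fin m) ℂ, (N.map constC).map ev = N := by
    intro N; ext k l; simp [Matrix.map_apply, hevc]
  have hone : (1 : Matrix (Fin m) (Fin m) ℂ).map constC = 1 :=
    Matrix.map_one constC (map_zero constC) (map_one constC)
  have hWinv : W⁻¹ = Matrix.map Z₀⁻¹ constC := by
    refine Matrix.inv_eq_right_inv ?_
    rw [hWdef, ← Matrix.map_mul, Matrix.mul_nonsing_inv Z₀ hdet₀, hone]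
  have hYev : Matrix.map Z⁻¹ ev = Z₀⁻¹ := by
    refine (Matrix.inv_eq_right_inv ?_).symm
    rw [hZ₀def, ← Matrix.map_mul, hZY, Matrix.map_one ev (map_zero ev) (map_one ev)]
  refine ⟨Z₀, W⁻¹ * Z, hZ₀, ?_, ?_, ?_⟩
  · -- entries of Z₁ - 1 in J
    have hZ₁ev : (W⁻¹ * Z).map ev = 1 := by
      rw [Matrix.map_mul, hWinv, hconstev, ← hZ₀def, Matrix.nonsing_inv_mul Z₀ hdet₀]
    intro k l
    have h := sub_mem (W⁻¹ * Z) 1 hZ₁ev k l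
    rwa [hone] at h
  · rw [← mul_assoc, hWW, one_mul]
  · intro A At Aq hA
    set A' : Matrix (Fin m) (Fin m) LaurentTwo := (A : Matrix (Fin m) (Fin m) LaurentTwo)
      with hA'def
    set E : Matrix (Fin m) (Fin m) LaurentTwo := A' - 1 with hEdef
    set F : Matrix (Fin m) (Fin m) LaurentTwo :=
      (tVar - constC α) • At.map constC + (qVar - constC β) • Aq.map constC with hFdef
    have hEF : ∀ k l, (E - F) k l ∈ J ^ 2 := by
      intro k l
      have h := hA k l
      rwa [sub_sub (A' - 1)] at h
    have hEF' : ∀ k l, (E - F) k l ∈ J * J := by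
      intro k l; exact pow_two J ▸ hEF k l
    have hF_J : ∀ k l, F k l ∈ J := by
      intro k l
      rw [hFdef]
      simp only [Matrix.add_apply, Matrix.smul_apply, smul_eq_mul]
      exact add_mem (Ideal.mul_mem_right _ _ htj) (Ideal.mul_mem_right _ _ hqj)
    have hE_J : ∀ k l, E k l ∈ J := by
      intro k l
      have h1 : (E - F) k l ∈ J := Ideal.pow_le_self (by norm_num) (hEF k l)
      have h2 : E k l = (E - F) k l + F k l := by simp
      rw [h2]; exact add_mem h1 (hF_J k l)
    have hZW : ∀ k l, (Z - W) k l ∈ J := sub_mem Z Z₀ rfl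
    have hYW : ∀ k l, (Z⁻¹ - W⁻¹) k l ∈ J := by
      have h := sub_mem Z⁻¹ Z₀⁻¹ hYev
      rwa [← hWinv] at h
    have e1 : ∀ N : Matrix (Fin m) (Fin m) ℂ,
        W * N.map constC * W⁻¹ = (Z₀ * N * Z₀⁻¹).map constC := by
      intro N
      rw [hWdef, hWinv, ← Matrix.map_mul, ← Matrix.map_mul]
    have hmulF : W * F * W⁻¹
        = (tVar - constC α) • (Z₀ * At * Z₀⁻¹).map constC
          + (qVar - constC β) • (Z₀ * Aq * Z₀⁻¹).map constC := by
      calc W * F * W⁻¹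
          = W * ((tVar - constC α) • At.map constC) * W⁻¹
            + W * ((qVar - constC β) • Aq.map constC) * W⁻¹ := by
            rw [hFdef, mul_add, add_mul]
        _ = (tVar - constC α) • (W * At.map constC * W⁻¹)
            + (qVar - constC β) • (W * Aq.map constC * W⁻¹) := by
            rw [lkb_smul_conj, lkb_smul_conj]
        _ = _ := by rw [e1, e1]
    have hZA : Z * A' * Z⁻¹ = Z * E * Z⁻¹ + 1 := by
      have hh : A' = E + 1 := by rw [hEdef, sub_add_cancel]
      rw [hh, mul_add, mul_one, add_mul, hZY]
    have hident : Z * A' * Z⁻¹ - 1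
          - (tVar - constC α) • (Z₀ * At * Z₀⁻¹).map constC
          - (qVar - constC β) • (Z₀ * Aq * Z₀⁻¹).map constC
        = (Z - W) * E * Z⁻¹ + W * (E * (Z⁻¹ - W⁻¹)) + W * ((E - F) * W⁻¹) := by
      rw [sub_sub (Z * A' * Z⁻¹ - 1), ← hmulF, hZA, ← mul_assoc, ← mul_assoc]
      exact lkb_conj_identity Z W W⁻¹ Z⁻¹ E F
    intro k l
    rw [hident, pow_two]
    have m1 := lkb_entry_mul_right Z⁻¹ (lkb_entry_mul_mem hZW hE_J)
    have m2 := lkb_entry_mul_left W (lkb_entry_mul_mem hE_J hYW)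
    have m3 := lkb_entry_mul_left W (lkb_entry_mul_right W⁻¹ hEF')
    rw [Matrix.add_apply, Matrix.add_apply]
    exact add_mem (add_mem (m1 k l) (m2 k l)) (m3 k l)
end

section
/- The kernel of the homomorphism g: GL_m(ℂ[t^{±1},q^{±1}]) → Aut(L(α,β)/L²(α,β)) induced by conjugation is Z · L(α,β), where Z is the center of GL_m(ℂ[t^{±1},q^{±1}]) (the nonzero scalar matrices over units of the ring), provided m ≥ 2. -/
open Matrix LaurentPolynomial TrivSqZeroExt DualNumber

noncomputable def leval {R S : Type*} [CommSemiring R] [CommSemiring S] (f : R →+* S) (u : Sˣ) :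
    LaurentPolynomial R →+* S :=
  AddMonoidAlgebra.liftNCRingHom f ((Units.coeHom S).comp (zpowersHom Sˣ u))
    fun _ _ => Commute.all _ _

lemma leval_C_mul_T {R S : Type*} [CommSemiring R] [CommSemiring S] (f : R →+* S) (u : Sˣ)
    (a : R) (n : ℤ) :
    leval f u (LaurentPolynomial.C a * LaurentPolynomial.T n) = f a * ((u ^ n : Sˣ) : S) := by
  rw [← single_eq_C_mul_T]
  show AddMonoidAlgebra.liftNC _ _ _ = _
  rw [AddMonoidAlgebra.liftNC_single]
  simp

lemma leval_C {R S : Type*} [CommSemiring R] [CommSemiring S] (f : R →+* S) (u : Sˣ) (a : R) :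
    leval f u (LaurentPolynomial.C a) = f a := by
  simpa using leval_C_mul_T f u a 0

lemma leval_T {R S : Type*} [CommSemiring R] [CommSemiring S] (f : R →+* S) (u : Sˣ) (n : ℤ) :
    leval f u (LaurentPolynomial.T n) = ((u ^ n : Sˣ) : S) := by
  simpa using leval_C_mul_T f u 1 n

noncomputable def uEps : (DualNumber ℂ)ˣ :=
  ⟨1 + ε, 1 - ε,
    by rw [show ((1 : ℂ[ε]) + ε) * (1 - ε) = 1 - ε * ε by ring, eps_mul_eps, sub_zero],
    by rw [show ((1 : ℂ[ε]) - ε) * (1 + ε) = 1 - ε * ε by ring, eps_mul_eps, sub_zero]⟩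

noncomputable def uInl (a : ℂ) (ha : a ≠ 0) : (DualNumber ℂ)ˣ :=
  Units.map (inlHom ℂ ℂ).toMonoidHom (Units.mk0 a ha)

lemma map_units_zpow {S T : Type*} [Monoid S] [Monoid T] (F : S →* T) (u : Sˣ) (k : ℤ) :
    F ((u ^ k : Sˣ) : S) = (((Units.map F u) ^ k : Tˣ) : T) := by
  rw [← map_zpow (Units.map F) u k, Units.coe_map]

lemma map_units_zpow' {S T : Type*} [Semiring S] [Semiring T] (F : S →+* T) (u : Sˣ) (k : ℤ) :
    F ((u ^ k : Sˣ) : S) = (((Units.map (F : S →* T) u) ^ k : Tˣ) : T) :=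
  map_units_zpow (F : S →* T) u k

noncomputable def fstRH : ℂ[ε] →+* ℂ := (fstHom ℂ ℂ ℂ : ℂ[ε] →ₐ[ℂ] ℂ).toRingHom

lemma fst_uEps : Units.map (fstRH : ℂ[ε] →* ℂ) uEps = 1 := by
  ext; simp [uEps, fstRH]

lemma fst_uInl (a : ℂ) (ha : a ≠ 0) :
    Units.map (fstRH : ℂ[ε] →* ℂ) (uInl a ha) = Units.mk0 a ha := by
  ext; simp [uInl, fstRH]

variable (α β : ℂ) (hα : α ≠ 0) (hβ : β ≠ 0)

/-- evaluation `t ↦ α(1+ε)`, `q ↦ β`. -/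
noncomputable def psit : LaurentTwo →+* ℂ[ε] :=
  leval (leval (inlHom ℂ ℂ) (uInl α hα * uEps)) (uInl β hβ)

/-- evaluation at `(α, β)`. -/
noncomputable def evA : LaurentTwo →+* ℂ := fstRH.comp (psit α β hα hβ)

lemma psit_monomial (c : ℂ) (k n : ℤ) :
    psit α β hα hβ (LaurentPolynomial.C (LaurentPolynomial.C c * LaurentPolynomial.T k)
        * LaurentPolynomial.T n)
      = inl c * (((uInl α hα * uEps) ^ k : _ˣ) : ℂ[ε]) * (((uInl β hβ) ^ n : _ˣ) : ℂ[ε]) := by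
  rw [psit, leval_C_mul_T, leval_C_mul_T]
  simp [mul_comm, mul_assoc, mul_left_comm]

lemma evA_monomial (c : ℂ) (k n : ℤ) :
    evA α β hα hβ (LaurentPolynomial.C (LaurentPolynomial.C c * LaurentPolynomial.T k)
        * LaurentPolynomial.T n)
      = c * ((Units.mk0 α hα ^ k : ℂˣ) : ℂ) * ((Units.mk0 β hβ ^ n : ℂˣ) : ℂ) := by
  rw [evA, RingHom.comp_apply, psit_monomial]
  rw [_root_.map_mul, _root_.map_mul,
    map_units_zpow' fstRH, map_units_zpow' fstRH]
  rw [_root_.map_mul, fst_uInl, fst_uEps, mul_one, fst_uInl]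
  simp [fstRH]

lemma psit_constC (x : ℂ) : psit α β hα hβ (constC x) = inl x := by
  rw [constC, RingHom.comp_apply, psit, leval_C, leval_C]
  rfl

lemma evA_constC (x : ℂ) : evA α β hα hβ (constC x) = x := by
  rw [evA, RingHom.comp_apply, psit_constC]
  simp [fstRH]

lemma psit_tVar : psit α β hα hβ tVar = inl α * (1 + ε) := by
  rw [tVar, psit, leval_C, leval_T]
  simp [uInl, uEps]

lemma psit_qVar : psit α β hα hβ qVar = inl β := by
  rw [qVar, psit, leval_T]
  simp [uInl]


lemma pow_helper {Q : Type*} [CommRing Q] (g : ℤ → Q) (hg : ∀ a b, g (a + b) = g a * g b)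
    (h0 : g 0 = 1) (u : Qˣ) (h1 : g 1 = u) : ∀ k : ℤ, g k = ((u ^ k : Qˣ) : Q) := by
  intro k
  induction k using Int.induction_on with
  | zero => simpa using h0
  | succ k ih => rw [hg k 1, ih, h1, ← Units.val_mul, ← _root_.zpow_add_one]
  | pred k ih =>
      have h := hg (-(k : ℤ) - 1) 1
      rw [sub_add_cancel, ih, h1] at h
      rw [show (-(k:ℤ) - 1) = -(k:ℤ) - 1 from rfl]
      have : g (-(k:ℤ) - 1) = ((u ^ (-(k:ℤ)) : Qˣ) : Q) * ((u⁻¹ : Qˣ) : Q) := by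
        rw [Units.eq_mul_inv_iff_mul_eq]
        exact h.symm
      rw [this, ← Units.val_mul, ← _root_.zpow_sub_one]

variable (α β : ℂ) (hα : α ≠ 0) (hβ : β ≠ 0)

lemma quotient_eq (J : Ideal LaurentTwo)
    (hJ : J = Ideal.span {tVar - constC α, qVar - constC β}) (f : LaurentTwo) :
    Ideal.Quotient.mk J f = Ideal.Quotient.mk J (constC (evA α β hα hβ f)) := by
  set π := Ideal.Quotient.mk J with hπ
  have hmemt : tVar - constC α ∈ J := hJ ▸ Ideal.subset_span (by left; rfl)
  have hmemq : qVar - constC β ∈ J := hJ ▸ Ideal.subset_span (by right; rfl)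
  have ht1 : π tVar = π (constC α) := (Ideal.Quotient.mk_eq_mk_iff_sub_mem _ _).mpr hmemt
  have hq1 : π qVar = π (constC β) := (Ideal.Quotient.mk_eq_mk_iff_sub_mem _ _).mpr hmemq
  set ua : (LaurentTwo ⧸ J)ˣ := Units.map (π.comp constC).toMonoidHom (Units.mk0 α hα) with hua
  set ub : (LaurentTwo ⧸ J)ˣ := Units.map (π.comp constC).toMonoidHom (Units.mk0 β hβ) with hub
  have hTk : ∀ k : ℤ, π (LaurentPolynomial.C (LaurentPolynomial.T k))
      = π (constC ((Units.mk0 α hα ^ k : ℂˣ) : ℂ)) := by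
    intro k
    refine (pow_helper (fun k => π (LaurentPolynomial.C (LaurentPolynomial.T k)))
      (fun a b => by
        show π (LaurentPolynomial.C (LaurentPolynomial.T (a + b))) = _
        rw [T_add, _root_.map_mul, _root_.map_mul])
      (by
        show π (LaurentPolynomial.C (LaurentPolynomial.T 0)) = 1
        rw [T_zero, _root_.map_one, _root_.map_one]) ua (by simpa [hua, tVar] using ht1) k).trans
      (map_units_zpow' (π.comp constC) (Units.mk0 α hα) k).symm
  have hQn : ∀ n : ℤ, π (LaurentPolynomial.T n)
      = π (constC ((Units.mk0 β hβ ^ n : ℂˣ) : ℂ)) := by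
    intro n
    refine (pow_helper (fun n => π (LaurentPolynomial.T n))
      (fun a b => by
        show π (LaurentPolynomial.T (a + b)) = _
        rw [T_add, _root_.map_mul])
      (by
        show π (LaurentPolynomial.T 0) = 1
        rw [T_zero, _root_.map_one]) ub (by simpa [hub, qVar] using hq1) n).trans
      (map_units_zpow' (π.comp constC) (Units.mk0 β hβ) n).symm
  induction f using LaurentPolynomial.induction_on' with
  | add p q hp hq => simp only [_root_.map_add, hp, hq]
  | C_mul_T n p =>
      induction p using LaurentPolynomial.induction_on' with
      | add p q hp hq =>
          simp only [_root_.map_add, add_mul, hp, hq]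
      | C_mul_T k c =>
          have hsplit : LaurentPolynomial.C (LaurentPolynomial.C c * LaurentPolynomial.T k)
              * LaurentPolynomial.T n
              = constC c * LaurentPolynomial.C (LaurentPolynomial.T k)
                * LaurentPolynomial.T n := by
            rw [_root_.map_mul]; rfl
          rw [evA_monomial, hsplit, _root_.map_mul, _root_.map_mul, hTk, hQn]
          simp only [← _root_.map_mul]

lemma sub_const_mem (J : Ideal LaurentTwo)
    (hJ : J = Ideal.span {tVar - constC α, qVar - constC β}) (f : LaurentTwo) :
    f - constC (evA α β hα hβ f) ∈ J :=
  (Ideal.Quotient.mk_eq_mk_iff_sub_mem _ _).mp (quotient_eq α β hα hβ J hJ f)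

lemma mem_of_evA_eq_zero (J : Ideal LaurentTwo)
    (hJ : J = Ideal.span {tVar - constC α, qVar - constC β}) (f : LaurentTwo)
    (h : evA α β hα hβ f = 0) : f ∈ J := by
  have := sub_const_mem α β hα hβ J hJ f
  rwa [h, _root_.map_zero, sub_zero] at this


variable (α β : ℂ) (hα : α ≠ 0) (hβ : β ≠ 0)

lemma psit_ker_sq (J : Ideal LaurentTwo)
    (hJ : J = Ideal.span {tVar - constC α, qVar - constC β}) {x : LaurentTwo}
    (hx : x ∈ J ^ 2) : psit α β hα hβ x = 0 := by
  set ψ := psit α β hα hβ with hψ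
  have hgen : J ≤ Ideal.comap ψ (Ideal.span {(ε : ℂ[ε])}) := by
    rw [hJ, Ideal.span_le]
    rintro x (rfl | rfl)
    · show ψ (tVar - constC α) ∈ Ideal.span {(ε : ℂ[ε])}
      rw [map_sub, psit_tVar, psit_constC]
      rw [Ideal.mem_span_singleton]
      exact ⟨inl α, by ring⟩
    · show ψ (qVar - constC β) ∈ Ideal.span {(ε : ℂ[ε])}
      rw [map_sub, psit_qVar, psit_constC, sub_self]
      exact Ideal.zero_mem _
  have hmul : J ^ 2 ≤ RingHom.ker ψ := by
    rw [pow_two]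
    refine Ideal.mul_le.mpr fun r hr s hs => ?_
    obtain ⟨a, ha⟩ := Ideal.mem_span_singleton.mp (hgen hr)
    obtain ⟨b, hb⟩ := Ideal.mem_span_singleton.mp (hgen hs)
    show ψ (r * s) = 0
    rw [_root_.map_mul, ha, hb, show (ε : ℂ[ε]) * a * ((ε : ℂ[ε]) * b) = ε * ε * (a * b) by ring,
      eps_mul_eps, zero_mul]
  exact hmul hx

lemma eps_cancel {x : ℂ[ε]} (h : (ε : ℂ[ε]) * x = 0) : fstRH x = 0 := by
  have h2 := congrArg TrivSqZeroExt.snd h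
  simpa [TrivSqZeroExt.snd_mul, fstRH] using h2

lemma scalar_of_comm {m : ℕ} (hm : 2 ≤ m) (W : Matrix (Fin m) (Fin m) ℂ)
    (h : ∀ i j : Fin m, i ≠ j → W * Matrix.single i j 1 = Matrix.single i j 1 * W) :
    W = W ⟨0, by omega⟩ ⟨0, by omega⟩ • (1 : Matrix (Fin m) (Fin m) ℂ) := by
  have key : ∀ i j k : Fin m, i ≠ j → W k i = if k = i then W j j else 0 := by
    intro i j k hij
    have h2 := congrFun (congrFun (h i j hij) k) j
    rw [Matrix.mul_single_apply_same, mul_one] at h2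
    by_cases hk : k = i
    · subst hk
      rw [Matrix.single_mul_apply_same, one_mul] at h2
      simp [h2]
    · rw [Matrix.single_mul_apply_of_ne (h := hk)] at h2
      simp [h2, hk]
  set z0 : Fin m := ⟨0, by omega⟩ with hz0
  set z1 : Fin m := ⟨1, by omega⟩ with hz1
  have hz01 : z0 ≠ z1 := by simp [hz0, hz1, Fin.ext_iff]
  ext k l
  rw [Matrix.smul_apply]
  by_cases hkl : k = l
  · subst hkl
    rw [Matrix.one_apply_eq, smul_eq_mul, mul_one]
    by_cases hk0 : k = z0
    · subst hk0; rfl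
    · have h1 := key k z0 k (hk0) -- W k k = W z0 z0
      simpa using h1
  · have hj : ∃ j : Fin m, j ≠ l := by
      by_cases hl : l = z0
      · exact ⟨z1, by rw [hl]; exact fun hc => hz01 hc.symm⟩
      · exact ⟨z0, fun hc => hl hc.symm⟩
    obtain ⟨j, hjl⟩ := hj
    have h1 := key l j k (fun hc => hjl hc.symm)
    rw [if_neg hkl] at h1
    rw [h1, Matrix.one_apply_ne hkl, smul_eq_mul, mul_zero]


set_option maxHeartbeats 1000000 in
set_option synthInstance.maxHeartbeats 400000 in
/-- For `m ≥ 2`, a unit `Z ∈ GL_m(ℂ[t^{±1},q^{±1}])` acts trivially on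
`L(α,β)/L²(α,β)` by conjugation if and only if `Z ∈ Z(GL_m) · L(α,β)`, i.e. `Z` is a
unit scalar multiple of a matrix congruent to `I` modulo `(t-α, q-β)`. -/
theorem lkb_conjugation_kernel
    (m : ℕ) (hm : 2 ≤ m) (α β : ℂ) (hα : α ≠ 0) (hβ : β ≠ 0)
    (J : Ideal LaurentTwo)
    (hJ : J = Ideal.span {tVar - constC α, qVar - constC β})
    (Z : Matrix (Fin m) (Fin m) LaurentTwo) (hZ : IsUnit Z) :
    (∀ A : Matrix.SpecialLinearGroup (Fin m) LaurentTwo,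
      (∀ k l, ((A : Matrix (Fin m) (Fin m) LaurentTwo) - 1) k l ∈ J) →
      ∀ k l,
        (Z * (A : Matrix (Fin m) (Fin m) LaurentTwo) * Z⁻¹
          - (A : Matrix (Fin m) (Fin m) LaurentTwo) :
          Matrix (Fin m) (Fin m) LaurentTwo) k l ∈ J ^ 2)
    ↔ ∃ (c : LaurentTwoˣ) (Z₁ : Matrix (Fin m) (Fin m) LaurentTwo),
        IsUnit Z₁ ∧ (∀ k l, (Z₁ - 1) k l ∈ J) ∧ Z = (c : LaurentTwo) • Z₁ := by
  have hJ2 : ∀ a b : LaurentTwo, a ∈ J → b ∈ J → a * b ∈ J ^ 2 := fun a b ha hb => by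
    rw [pow_two]; exact Ideal.mul_mem_mul ha hb
  constructor
  · intro H
    have hdet : IsUnit Z.det := (Matrix.isUnit_iff_isUnit_det Z).mp hZ
    have hZ1 : Z * Z⁻¹ = 1 := Matrix.mul_nonsing_inv Z hdet
    have hZ2 : Z⁻¹ * Z = 1 := Matrix.nonsing_inv_mul Z hdet
    set ev := evA α β hα hβ with hev
    set W : Matrix (Fin m) (Fin m) ℂ := Z.map ev with hW
    set W' : Matrix (Fin m) (Fin m) ℂ := Z⁻¹.map ev with hW'
    have hWW' : W * W' = 1 := by
      rw [hW, hW', ← Matrix.map_mul, hZ1, Matrix.map_one _ (map_zero ev) (map_one ev)]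
    have hW'W : W' * W = 1 := by
      rw [hW, hW', ← Matrix.map_mul, hZ2, Matrix.map_one _ (map_zero ev) (map_one ev)]
    have hmapstd : ∀ i j : Fin m,
        (Matrix.single i j (1 : LaurentTwo)).map ev = Matrix.single i j (1 : ℂ) := by
      intro i j; ext k l
      by_cases hkl : i = k ∧ j = l
      · obtain ⟨rfl, rfl⟩ := hkl
        simp [Matrix.map_apply]
      · rw [Matrix.map_apply, Matrix.single_apply_of_ne (h := hkl),
          Matrix.single_apply_of_ne (h := hkl), map_zero]
    have hcomm : ∀ i j : Fin m, i ≠ j →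
        W * Matrix.single i j 1 = Matrix.single i j 1 * W := by
      intro i j hij
      set B : Matrix (Fin m) (Fin m) LaurentTwo := Matrix.single i j 1 with hB
      have hdetE : (Matrix.transvection i j (tVar - constC α)).det = 1 :=
        Matrix.det_transvection_of_ne i j hij _
      set A : Matrix.SpecialLinearGroup (Fin m) LaurentTwo := ⟨_, hdetE⟩ with hA
      have hAmem : ∀ k l, ((A : Matrix (Fin m) (Fin m) LaurentTwo) - 1) k l ∈ J := by
        intro k l
        show (Matrix.transvection i j (tVar - constC α) - 1) k l ∈ J
        rw [Matrix.transvection, add_sub_cancel_left]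
        by_cases hkl : i = k ∧ j = l
        · obtain ⟨rfl, rfl⟩ := hkl
          rw [Matrix.single_apply_same]
          exact hJ ▸ Ideal.subset_span (Or.inl rfl)
        · rw [Matrix.single_apply_of_ne (h := hkl)]
          exact J.zero_mem
      have h3 := H A hAmem
      have hstd : Matrix.single i j (tVar - constC α) = (tVar - constC α) • B := by
        rw [hB, Matrix.smul_single, smul_eq_mul, mul_one]
      have hid : Z * (A : Matrix (Fin m) (Fin m) LaurentTwo) * Z⁻¹
          - (A : Matrix (Fin m) (Fin m) LaurentTwo)
          = (tVar - constC α) • (Z * B * Z⁻¹ - B) := by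
        show Z * (1 + Matrix.single i j (tVar - constC α)) * Z⁻¹
          - (1 + Matrix.single i j (tVar - constC α)) = _
        rw [hstd]
        simp only [mul_add, add_mul, Matrix.mul_smul, Matrix.smul_mul, mul_one, one_mul,
          hZ1, smul_sub]
        abel
      have h5 : ∀ k l, ev ((Z * B * Z⁻¹ - B) k l) = 0 := by
        intro k l
        have h6 := h3 k l
        rw [hid] at h6
        rw [Matrix.smul_apply, smul_eq_mul] at h6
        have h7 := psit_ker_sq α β hα hβ J hJ h6
        rw [_root_.map_mul, map_sub, psit_tVar, psit_constC] at h7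
        have h8 : (ε : ℂ[ε]) * (psit α β hα hβ ((Z * B * Z⁻¹ - B) k l)) = 0 := by
          have h9 := congrArg (fun y => inl α⁻¹ * y) h7
          simp only [mul_zero] at h9
          rw [show (inl α * (1 + ε) - inl α) * psit α β hα hβ ((Z * B * Z⁻¹ - B) k l)
              = inl α * ((ε : ℂ[ε]) * psit α β hα hβ ((Z * B * Z⁻¹ - B) k l)) by ring] at h9
          rwa [← mul_assoc, ← inl_mul, inv_mul_cancel₀ hα, inl_one, one_mul] at h9
        exact eps_cancel h8
      have hmap0 : (Z * B * Z⁻¹ - B).map ev = 0 := by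
        ext k l
        rw [Matrix.map_apply, h5, Matrix.zero_apply]
      have hWBW : W * Matrix.single i j 1 * W' = Matrix.single i j 1 := by
        have := hmap0
        rw [Matrix.map_sub _ (fun a b => map_sub ev a b), Matrix.map_mul, Matrix.map_mul, hmapstd, sub_eq_zero] at this
        rw [← hW, ← hW'] at this
        exact this
      calc W * Matrix.single i j 1 = W * Matrix.single i j 1 * (W' * W) := by
            rw [hW'W, mul_one]
        _ = (W * Matrix.single i j 1 * W') * W := (mul_assoc _ W' W).symm
        _ = Matrix.single i j 1 * W := by rw [hWBW]
    set z0 : Fin m := ⟨0, by omega⟩ with hz0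
    set lam : ℂ := W z0 z0 with hlam
    have hWeq : W = lam • 1 := scalar_of_comm hm W hcomm
    have hlam0 : lam ≠ 0 := by
      intro h0
      have h01 : (0 : Matrix (Fin m) (Fin m) ℂ) = 1 := by
        rw [← hWW', hWeq, h0, zero_smul, zero_mul]
      have := congrFun (congrFun h01 z0) z0
      simp at this
    refine ⟨Units.map constC.toMonoidHom (Units.mk0 lam hlam0), constC lam⁻¹ • Z, ?_, ?_, ?_⟩
    · refine (Matrix.isUnit_iff_isUnit_det _).mpr ?_
      rw [Matrix.det_smul]
      exact ((isUnit_iff_ne_zero.mpr (inv_ne_zero hlam0)).map constC).pow _ |>.mul hdet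
    · intro k l
      apply mem_of_evA_eq_zero α β hα hβ J hJ
      rw [Matrix.sub_apply, map_sub, Matrix.smul_apply, smul_eq_mul, _root_.map_mul,
        evA_constC]
      have hWkl : ev (Z k l) = lam * (1 : Matrix (Fin m) (Fin m) ℂ) k l := by
        have := congrFun (congrFun hWeq k) l
        rw [Matrix.smul_apply, smul_eq_mul] at this
        rw [← this]; rfl
      rw [show evA α β hα hβ (Z k l) = ev (Z k l) from rfl, hWkl]
      by_cases hkl : k = l
      · subst hkl
        rw [Matrix.one_apply_eq, Matrix.one_apply_eq, _root_.map_one, mul_one]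
        field_simp
        exact sub_self _
      · rw [Matrix.one_apply_ne hkl, Matrix.one_apply_ne hkl, map_zero, mul_zero, mul_zero,
          sub_zero]
    · rw [smul_smul]
      have : (↑(Units.map constC.toMonoidHom (Units.mk0 lam hlam0)) : LaurentTwo)
          = constC lam := rfl
      rw [this, ← _root_.map_mul, mul_inv_cancel₀ hlam0, _root_.map_one, one_smul]
  · rintro ⟨c, Z₁, hZ₁, hcong, rfl⟩
    intro A hA k l
    set Zf := (c : LaurentTwo) • Z₁ with hZf
    have hdet : IsUnit Zf.det := (Matrix.isUnit_iff_isUnit_det _).mp hZ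
    have h1 : Zf * Zf⁻¹ = 1 := Matrix.mul_nonsing_inv _ hdet
    have key : Zf * (A : Matrix (Fin m) (Fin m) LaurentTwo) * Zf⁻¹
        - (A : Matrix (Fin m) (Fin m) LaurentTwo)
        = ((c : LaurentTwo) • ((Z₁ - 1) * ((A : Matrix (Fin m) (Fin m) LaurentTwo) - 1)
            - ((A : Matrix (Fin m) (Fin m) LaurentTwo) - 1) * (Z₁ - 1))) * Zf⁻¹ := by
      have expand : (Z₁ - 1) * ((A : Matrix (Fin m) (Fin m) LaurentTwo) - 1)
          - ((A : Matrix (Fin m) (Fin m) LaurentTwo) - 1) * (Z₁ - 1)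
          = Z₁ * (A : Matrix (Fin m) (Fin m) LaurentTwo)
            - (A : Matrix (Fin m) (Fin m) LaurentTwo) * Z₁ := by
        simp only [sub_mul, mul_sub, one_mul, mul_one]
        abel
      rw [expand]
      have h2 : (c : LaurentTwo) • (Z₁ * (A : Matrix (Fin m) (Fin m) LaurentTwo)
          - (A : Matrix (Fin m) (Fin m) LaurentTwo) * Z₁)
          = Zf * (A : Matrix (Fin m) (Fin m) LaurentTwo)
            - (A : Matrix (Fin m) (Fin m) LaurentTwo) * Zf := by
        rw [smul_sub, hZf, Matrix.smul_mul, Matrix.mul_smul]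
      rw [h2, sub_mul, mul_assoc _ Zf Zf⁻¹, h1, mul_one]
    rw [key]
    rw [Matrix.smul_mul, Matrix.smul_apply, smul_eq_mul]
    refine Ideal.mul_mem_left _ _ ?_
    rw [Matrix.mul_apply]
    refine Ideal.sum_mem _ fun x _ => Ideal.mul_mem_right _ _ ?_
    rw [Matrix.sub_apply, Matrix.mul_apply, Matrix.mul_apply, ← Finset.sum_sub_distrib]
    refine Ideal.sum_mem _ fun y _ => ?_
    refine Ideal.sub_mem _ (hJ2 _ _ (hcong k y) (hA y x)) (hJ2 _ _ ?_ (hcong y x))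
    exact hA k y
end

section
/- Let B₄ act via the reduced Burau representation β₄: B₄ → GL₃(ℤ[t,t⁻¹]), with σ₁ ↦ [[-t,1,0],[0,1,0],[0,0,1]], σ₂ ↦ [[1,0,0],[t,-t,1],[0,0,1]], σ₃ ↦ [[1,0,0],[0,1,0],[0,t,-t]]. Let ρ₄(α) be the induced action on 𝔰𝔩₃(ℂ) by conjugation after evaluating t = α. Then the characteristic polynomial of each of X(α) = ρ₄(α)(σ₃σ₁⁻¹), X(α)⁻¹, Y(α) = ρ₄(α)(σ₂σ₃σ₁⁻¹σ₂⁻¹), and Y(α)⁻¹ on the 8-dimensional space 𝔰𝔩₃(ℂ) equals (t-1)²(t - 1/α²)(t - α²)(t + α)²(t + 1/α)². -/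
open Matrix Polynomial

/-- The Lie algebra `𝔰𝔩₃(ℂ)` of traceless `3 × 3` complex matrices, as a subspace. -/
noncomputable def sl3 : Submodule ℂ (Matrix (Fin 3) (Fin 3) ℂ) :=
  LinearMap.ker (Matrix.traceLinearMap (Fin 3) ℂ ℂ)

namespace Burau4Aux

section evals
variable {β : Type*} (a0 a1 a2 a3 a4 a5 a6 a7 : β)
@[simp] lemma vec8_0 : ![a0, a1, a2, a3, a4, a5, a6, a7] (0 : Fin 8) = a0 := rfl
@[simp] lemma vec8_1 : ![a0, a1, a2, a3, a4, a5, a6, a7] (1 : Fin 8) = a1 := rfl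
@[simp] lemma vec8_2 : ![a0, a1, a2, a3, a4, a5, a6, a7] (2 : Fin 8) = a2 := rfl
@[simp] lemma vec8_3 : ![a0, a1, a2, a3, a4, a5, a6, a7] (3 : Fin 8) = a3 := rfl
@[simp] lemma vec8_4 : ![a0, a1, a2, a3, a4, a5, a6, a7] (4 : Fin 8) = a4 := rfl
@[simp] lemma vec8_5 : ![a0, a1, a2, a3, a4, a5, a6, a7] (5 : Fin 8) = a5 := rfl
@[simp] lemma vec8_6 : ![a0, a1, a2, a3, a4, a5, a6, a7] (6 : Fin 8) = a6 := rfl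
@[simp] lemma vec8_7 : ![a0, a1, a2, a3, a4, a5, a6, a7] (7 : Fin 8) = a7 := rfl
end evals

noncomputable def bmat : Fin 8 → Matrix (Fin 3) (Fin 3) ℂ :=
  ![!![0,0,0;0,0,0;1,0,0], !![0,0,0;0,0,0;0,1,0], !![0,0,0;1,0,0;0,0,0],
    !![1,0,0;0,-1,0;0,0,0], !![0,0,0;0,1,0;0,0,-1], !![0,0,0;0,0,1;0,0,0],
    !![0,1,0;0,0,0;0,0,0], !![0,0,1;0,0,0;0,0,0]]

def coords (A : Matrix (Fin 3) (Fin 3) ℂ) : Fin 8 → ℂ :=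
  ![A 2 0, A 2 1, A 1 0, A 0 0, -A 2 2, A 1 2, A 0 1, A 0 2]

noncomputable def vecm (v : Fin 8 → ℂ) : Matrix (Fin 3) (Fin 3) ℂ :=
  !![v 3, v 6, v 7; v 2, v 4 - v 3, v 5; v 0, v 1, -v 4]

lemma coords_vecm (v : Fin 8 → ℂ) : coords (vecm v) = v := by
  funext k; fin_cases k <;> simp [coords, vecm]

lemma vecm_coords (A : Matrix (Fin 3) (Fin 3) ℂ) (h : A.trace = 0) :
    vecm (coords A) = A := by
  rw [Matrix.trace_fin_three] at h
  ext i j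
  fin_cases i <;> fin_cases j <;> simp [coords, vecm] <;> linear_combination -h

lemma trace_vecm (v : Fin 8 → ℂ) : (vecm v).trace = 0 := by
  simp [vecm, Matrix.trace_fin_three]

lemma vecm_single (j : Fin 8) : vecm (Pi.single j 1) = bmat j := by
  fin_cases j <;> ext i k <;> fin_cases i <;> fin_cases k <;>
    simp [vecm, bmat, Pi.single_apply]


lemma mem_sl3 (A : Matrix (Fin 3) (Fin 3) ℂ) : A ∈ sl3 ↔ A.trace = 0 := by
  simp [sl3, LinearMap.mem_ker, Matrix.traceLinearMap]

/-- coordinates on `sl3` relative to the conjugated basis `Q * bmat i * Qi`. -/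
noncomputable def eQ (Q Qi : Matrix (Fin 3) (Fin 3) ℂ) (hQ : Q * Qi = 1) (hQi : Qi * Q = 1) :
    sl3 ≃ₗ[ℂ] (Fin 8 → ℂ) where
  toFun A := coords (Qi * (A : Matrix (Fin 3) (Fin 3) ℂ) * Q)
  map_add' A B := by
    funext k; fin_cases k <;>
      simp [coords, Matrix.mul_add, Matrix.add_mul, Matrix.add_apply] <;> ring
  map_smul' c A := by
    funext k; fin_cases k <;>
      simp [coords, Matrix.mul_smul, Matrix.smul_mul, Matrix.smul_apply] <;> ring
  invFun v := ⟨Q * vecm v * Qi, by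
    rw [mem_sl3, Matrix.trace_mul_cycle, hQi, Matrix.one_mul, trace_vecm]⟩
  left_inv A := by
    apply Subtype.ext
    have htr : (Qi * (A : Matrix (Fin 3) (Fin 3) ℂ) * Q).trace = 0 := by
      rw [Matrix.trace_mul_cycle, hQ, Matrix.one_mul, ← mem_sl3]
      exact A.2
    show Q * vecm (coords (Qi * (A : Matrix (Fin 3) (Fin 3) ℂ) * Q)) * Qi = A
    rw [vecm_coords _ htr]
    calc Q * (Qi * (A : Matrix (Fin 3) (Fin 3) ℂ) * Q) * Qi
        = (Q * Qi) * (A : Matrix (Fin 3) (Fin 3) ℂ) * (Q * Qi) := by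
          simp only [Matrix.mul_assoc]
      _ = A := by rw [hQ]; simp
  right_inv v := by
    show coords (Qi * (Q * vecm v * Qi) * Q) = v
    have : Qi * (Q * vecm v * Qi) * Q = vecm v := by
      calc Qi * (Q * vecm v * Qi) * Q = (Qi * Q) * vecm v * (Qi * Q) := by
            simp only [Matrix.mul_assoc]
        _ = vecm v := by rw [hQi]; simp
    rw [this, coords_vecm]

lemma key (Q Qi T Ti M : Matrix (Fin 3) (Fin 3) ℂ)
    (hQ : Q * Qi = 1) (hQi : Qi * Q = 1) (hT : T * Ti = 1)
    (hM : M = Q * T * Qi)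
    (f : Module.End ℂ sl3)
    (hf : ∀ v : sl3, ((f v : Matrix (Fin 3) (Fin 3) ℂ)) = M * (v : Matrix (Fin 3) (Fin 3) ℂ) * M⁻¹)
    (A : Matrix (Fin 8) (Fin 8) ℂ)
    (hA : ∀ j, T * bmat j * Ti = vecm (fun i => A i j)) :
    f.charpoly = A.charpoly := by
  have hcol : ∀ Z : Matrix (Fin 3) (Fin 3) ℂ, Qi * (Q * Z) = Z := by
    intro Z; rw [← Matrix.mul_assoc, hQi, Matrix.one_mul]
  have hMinv : M⁻¹ = Q * Ti * Qi := by
    apply inv_eq_right_inv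
    rw [hM]
    calc Q * T * Qi * (Q * Ti * Qi) = Q * (T * Ti) * Qi := by
          simp only [Matrix.mul_assoc, hcol]
      _ = 1 := by rw [hT, Matrix.mul_one, hQ]
  let e := eQ Q Qi hQ hQi
  let B : Module.Basis (Fin 8) ℂ sl3 := Module.Basis.ofEquivFun e
  rw [← LinearMap.charpoly_toMatrix f B]
  congr 1
  ext i j
  have hBj : ((B j : sl3) : Matrix (Fin 3) (Fin 3) ℂ) = Q * bmat j * Qi := by
    have h1 : B j = e.symm (Pi.single j 1) := by
      simp only [B, Module.Basis.coe_ofEquivFun]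
    rw [h1]
    show Q * vecm (Pi.single j 1) * Qi = _
    rw [vecm_single]
  rw [LinearMap.toMatrix_apply]
  show (e (f (B j))) i = A i j
  show coords (Qi * ((f (B j) : sl3) : Matrix (Fin 3) (Fin 3) ℂ) * Q) i = A i j
  rw [hf, hBj, hMinv, hM]
  have : Qi * (Q * T * Qi * (Q * bmat j * Qi) * (Q * Ti * Qi)) * Q
      = T * bmat j * Ti := by
    calc Qi * (Q * T * Qi * (Q * bmat j * Qi) * (Q * Ti * Qi)) * Q
        = Qi * (Q * (T * (bmat j * (Ti * (Qi * Q))))) := by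
          simp only [Matrix.mul_assoc, hcol]
      _ = T * bmat j * Ti := by
          rw [hQi, Matrix.mul_one, hcol]; simp only [Matrix.mul_assoc]
  rw [this, hA, coords_vecm]


noncomputable def Tm (α : ℂ) : Matrix (Fin 3) (Fin 3) ℂ :=
  !![-α⁻¹, 0, 0; α⁻¹, 1, 0; α, α + α^2, -α]

noncomputable def Tim (α : ℂ) : Matrix (Fin 3) (Fin 3) ℂ :=
  !![-α, 0, 0; 1, 1, 0; 1, 1 + α, -α⁻¹]

noncomputable def AX (α : ℂ) : Matrix (Fin 8) (Fin 8) ℂ :=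
  !![α^2, -α, -α^2 - α^3, -α - 2*α^2, 2*α + α^2, α + α^2, α, α;
     0, -α, 0, -α - α^2, 2*α + 2*α^2, α + 2*α^2 + α^3, α, α + α^2;
     0, 0, -α, -2, 1, 1, α⁻¹, α⁻¹;
     0, 0, 0, 1, 0, 0, -α⁻¹, -α⁻¹;
     0, 0, 0, 0, 1, 1 + α, 0, 1;
     0, 0, 0, 0, 0, -α⁻¹, 0, -α⁻¹^2;
     0, 0, 0, 0, 0, 0, -α⁻¹, -α⁻¹ - 1;
     0, 0, 0, 0, 0, 0, 0, α⁻¹^2]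

noncomputable def AXi (α : ℂ) : Matrix (Fin 8) (Fin 8) ℂ :=
  !![α⁻¹^2, -α⁻¹^2, -α⁻¹ - 1, -2*α⁻¹ - 1, α⁻¹ + 2, α + α^2, α⁻¹, α;
     0, -α⁻¹, 0, -1 - α, 2 + 2*α, α + 2*α^2 + α^3, 1, α + α^2;
     0, 0, -α⁻¹, -2*α⁻¹, α⁻¹, α, α⁻¹, α;
     0, 0, 0, 1, 0, 0, -1, -α^2;
     0, 0, 0, 0, 1, α + α^2, 0, α;
     0, 0, 0, 0, 0, -α, 0, -α;
     0, 0, 0, 0, 0, 0, -α, -α^2 - α^3;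
     0, 0, 0, 0, 0, 0, 0, α^2]

set_option linter.unnecessarySeqFocus false
set_option linter.unreachableTactic false
set_option linter.unusedTactic false

lemma Tm_Tim (α : ℂ) (hα : α ≠ 0) : Tm α * Tim α = 1 := by
  ext i j
  fin_cases i <;> fin_cases j <;>
    (try simp [Tm, Tim, Matrix.mul_apply, Fin.sum_univ_three, Matrix.one_apply,
      Matrix.vecHead, Matrix.vecTail]) <;> (try field_simp) <;> (try ring)

lemma Tim_Tm (α : ℂ) (hα : α ≠ 0) : Tim α * Tm α = 1 := by
  ext i j
  fin_cases i <;> fin_cases j <;>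
    (try simp [Tm, Tim, Matrix.mul_apply, Fin.sum_univ_three, Matrix.one_apply,
      Matrix.vecHead, Matrix.vecTail]) <;> (try field_simp) <;> (try ring)

set_option maxHeartbeats 800000 in
lemma hAX_0 (α : ℂ) (hα : α ≠ 0) :
    Tm α * bmat 0 * Tim α = vecm (fun i => AX α i 0) := by
  show Tm α * !![0,0,0;0,0,0;1,0,0] * Tim α = !![(0), (0), (0); (0), (0) - (0), (0); (α^2), (0), -(0)]
  ext i k
  fin_cases i <;> fin_cases k <;>
    (try simp [Tm, Tim, Matrix.mul_apply, Fin.sum_univ_three,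
      Matrix.vecHead, Matrix.vecTail]) <;> (try field_simp) <;> (try ring)

set_option maxHeartbeats 800000 in
lemma hAX_1 (α : ℂ) (hα : α ≠ 0) :
    Tm α * bmat 1 * Tim α = vecm (fun i => AX α i 1) := by
  show Tm α * !![0,0,0;0,0,0;0,1,0] * Tim α = !![(0), (0), (0); (0), (0) - (0), (0); (-α), (-α), -(0)]
  ext i k
  fin_cases i <;> fin_cases k <;>
    (try simp [Tm, Tim, Matrix.mul_apply, Fin.sum_univ_three,
      Matrix.vecHead, Matrix.vecTail]) <;> (try field_simp) <;> (try ring)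

set_option maxHeartbeats 800000 in
lemma hAX_2 (α : ℂ) (hα : α ≠ 0) :
    Tm α * bmat 2 * Tim α = vecm (fun i => AX α i 2) := by
  show Tm α * !![0,0,0;1,0,0;0,0,0] * Tim α = !![(0), (0), (0); (-α), (0) - (0), (0); (-α^2 - α^3), (0), -(0)]
  ext i k
  fin_cases i <;> fin_cases k <;>
    (try simp [Tm, Tim, Matrix.mul_apply, Fin.sum_univ_three,
      Matrix.vecHead, Matrix.vecTail]) <;> (try field_simp) <;> (try ring)

set_option maxHeartbeats 800000 in
lemma hAX_3 (α : ℂ) (hα : α ≠ 0) :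
    Tm α * bmat 3 * Tim α = vecm (fun i => AX α i 3) := by
  show Tm α * !![1,0,0;0,-1,0;0,0,0] * Tim α = !![(1), (0), (0); (-2), (0) - (1), (0); (-α - 2*α^2), (-α - α^2), -(0)]
  ext i k
  fin_cases i <;> fin_cases k <;>
    (try simp [Tm, Tim, Matrix.mul_apply, Fin.sum_univ_three,
      Matrix.vecHead, Matrix.vecTail]) <;> (try field_simp) <;> (try ring)

set_option maxHeartbeats 800000 in
lemma hAX_4 (α : ℂ) (hα : α ≠ 0) :
    Tm α * bmat 4 * Tim α = vecm (fun i => AX α i 4) := by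
  show Tm α * !![0,0,0;0,1,0;0,0,-1] * Tim α = !![(0), (0), (0); (1), (1) - (0), (0); (2*α + α^2), (2*α + 2*α^2), -(1)]
  ext i k
  fin_cases i <;> fin_cases k <;>
    (try simp [Tm, Tim, Matrix.mul_apply, Fin.sum_univ_three,
      Matrix.vecHead, Matrix.vecTail]) <;> (try field_simp) <;> (try ring)

set_option maxHeartbeats 800000 in
lemma hAX_5 (α : ℂ) (hα : α ≠ 0) :
    Tm α * bmat 5 * Tim α = vecm (fun i => AX α i 5) := by
  show Tm α * !![0,0,0;0,0,1;0,0,0] * Tim α = !![(0), (0), (0); (1), (1 + α) - (0), (-α⁻¹); (α + α^2), (α + 2*α^2 + α^3), -(1 + α)]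
  ext i k
  fin_cases i <;> fin_cases k <;>
    (try simp [Tm, Tim, Matrix.mul_apply, Fin.sum_univ_three,
      Matrix.vecHead, Matrix.vecTail]) <;> (try field_simp) <;> (try ring)

set_option maxHeartbeats 800000 in
lemma hAX_6 (α : ℂ) (hα : α ≠ 0) :
    Tm α * bmat 6 * Tim α = vecm (fun i => AX α i 6) := by
  show Tm α * !![0,1,0;0,0,0;0,0,0] * Tim α = !![(-α⁻¹), (-α⁻¹), (0); (α⁻¹), (0) - (-α⁻¹), (0); (α), (α), -(0)]
  ext i k
  fin_cases i <;> fin_cases k <;>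
    (try simp [Tm, Tim, Matrix.mul_apply, Fin.sum_univ_three,
      Matrix.vecHead, Matrix.vecTail]) <;> (try field_simp) <;> (try ring)

set_option maxHeartbeats 800000 in
lemma hAX_7 (α : ℂ) (hα : α ≠ 0) :
    Tm α * bmat 7 * Tim α = vecm (fun i => AX α i 7) := by
  show Tm α * !![0,0,1;0,0,0;0,0,0] * Tim α = !![(-α⁻¹), (-α⁻¹ - 1), (α⁻¹^2); (α⁻¹), (1) - (-α⁻¹), (-α⁻¹^2); (α), (α + α^2), -(1)]
  ext i k
  fin_cases i <;> fin_cases k <;>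
    (try simp [Tm, Tim, Matrix.mul_apply, Fin.sum_univ_three,
      Matrix.vecHead, Matrix.vecTail]) <;> (try field_simp) <;> (try ring)

lemma hAX (α : ℂ) (hα : α ≠ 0) :
    ∀ j, Tm α * bmat j * Tim α = vecm (fun i => AX α i j) := by
  intro j
  fin_cases j
  exacts [hAX_0 α hα, hAX_1 α hα, hAX_2 α hα, hAX_3 α hα, hAX_4 α hα, hAX_5 α hα, hAX_6 α hα, hAX_7 α hα]


set_option maxHeartbeats 800000 in
lemma hAXi_0 (α : ℂ) (hα : α ≠ 0) :
    Tim α * bmat 0 * Tm α = vecm (fun i => AXi α i 0) := by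
  show Tim α * !![0,0,0;0,0,0;1,0,0] * Tm α = !![(0), (0), (0); (0), (0) - (0), (0); (α⁻¹^2), (0), -(0)]
  ext i k
  fin_cases i <;> fin_cases k <;>
    (try simp [Tm, Tim, Matrix.mul_apply, Fin.sum_univ_three,
      Matrix.vecHead, Matrix.vecTail]) <;> (try field_simp) <;> (try ring)

set_option maxHeartbeats 800000 in
lemma hAXi_1 (α : ℂ) (hα : α ≠ 0) :
    Tim α * bmat 1 * Tm α = vecm (fun i => AXi α i 1) := by
  show Tim α * !![0,0,0;0,0,0;0,1,0] * Tm α = !![(0), (0), (0); (0), (0) - (0), (0); (-α⁻¹^2), (-α⁻¹), -(0)]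
  ext i k
  fin_cases i <;> fin_cases k <;>
    (try simp [Tm, Tim, Matrix.mul_apply, Fin.sum_univ_three,
      Matrix.vecHead, Matrix.vecTail]) <;> (try field_simp) <;> (try ring)

set_option maxHeartbeats 800000 in
lemma hAXi_2 (α : ℂ) (hα : α ≠ 0) :
    Tim α * bmat 2 * Tm α = vecm (fun i => AXi α i 2) := by
  show Tim α * !![0,0,0;1,0,0;0,0,0] * Tm α = !![(0), (0), (0); (-α⁻¹), (0) - (0), (0); (-α⁻¹ - 1), (0), -(0)]
  ext i k
  fin_cases i <;> fin_cases k <;>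
    (try simp [Tm, Tim, Matrix.mul_apply, Fin.sum_univ_three,
      Matrix.vecHead, Matrix.vecTail]) <;> (try field_simp) <;> (try ring)

set_option maxHeartbeats 800000 in
lemma hAXi_3 (α : ℂ) (hα : α ≠ 0) :
    Tim α * bmat 3 * Tm α = vecm (fun i => AXi α i 3) := by
  show Tim α * !![1,0,0;0,-1,0;0,0,0] * Tm α = !![(1), (0), (0); (-2*α⁻¹), (0) - (1), (0); (-2*α⁻¹ - 1), (-1 - α), -(0)]
  ext i k
  fin_cases i <;> fin_cases k <;>
    (try simp [Tm, Tim, Matrix.mul_apply, Fin.sum_univ_three,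
      Matrix.vecHead, Matrix.vecTail]) <;> (try field_simp) <;> (try ring)

set_option maxHeartbeats 800000 in
lemma hAXi_4 (α : ℂ) (hα : α ≠ 0) :
    Tim α * bmat 4 * Tm α = vecm (fun i => AXi α i 4) := by
  show Tim α * !![0,0,0;0,1,0;0,0,-1] * Tm α = !![(0), (0), (0); (α⁻¹), (1) - (0), (0); (α⁻¹ + 2), (2 + 2*α), -(1)]
  ext i k
  fin_cases i <;> fin_cases k <;>
    (try simp [Tm, Tim, Matrix.mul_apply, Fin.sum_univ_three,
      Matrix.vecHead, Matrix.vecTail]) <;> (try field_simp) <;> (try ring)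

set_option maxHeartbeats 800000 in
lemma hAXi_5 (α : ℂ) (hα : α ≠ 0) :
    Tim α * bmat 5 * Tm α = vecm (fun i => AXi α i 5) := by
  show Tim α * !![0,0,0;0,0,1;0,0,0] * Tm α = !![(0), (0), (0); (α), (α + α^2) - (0), (-α); (α + α^2), (α + 2*α^2 + α^3), -(α + α^2)]
  ext i k
  fin_cases i <;> fin_cases k <;>
    (try simp [Tm, Tim, Matrix.mul_apply, Fin.sum_univ_three,
      Matrix.vecHead, Matrix.vecTail]) <;> (try field_simp) <;> (try ring)

set_option maxHeartbeats 800000 in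
lemma hAXi_6 (α : ℂ) (hα : α ≠ 0) :
    Tim α * bmat 6 * Tm α = vecm (fun i => AXi α i 6) := by
  show Tim α * !![0,1,0;0,0,0;0,0,0] * Tm α = !![(-1), (-α), (0); (α⁻¹), (0) - (-1), (0); (α⁻¹), (1), -(0)]
  ext i k
  fin_cases i <;> fin_cases k <;>
    (try simp [Tm, Tim, Matrix.mul_apply, Fin.sum_univ_three,
      Matrix.vecHead, Matrix.vecTail]) <;> (try field_simp) <;> (try ring)

set_option maxHeartbeats 800000 in
lemma hAXi_7 (α : ℂ) (hα : α ≠ 0) :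
    Tim α * bmat 7 * Tm α = vecm (fun i => AXi α i 7) := by
  show Tim α * !![0,0,1;0,0,0;0,0,0] * Tm α = !![(-α^2), (-α^2 - α^3), (α^2); (α), (α) - (-α^2), (-α); (α), (α + α^2), -(α)]
  ext i k
  fin_cases i <;> fin_cases k <;>
    (try simp [Tm, Tim, Matrix.mul_apply, Fin.sum_univ_three,
      Matrix.vecHead, Matrix.vecTail]) <;> (try field_simp) <;> (try ring)

lemma hAXi (α : ℂ) (hα : α ≠ 0) :
    ∀ j, Tim α * bmat j * Tm α = vecm (fun i => AXi α i j) := by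
  intro j
  fin_cases j
  exacts [hAXi_0 α hα, hAXi_1 α hα, hAXi_2 α hα, hAXi_3 α hα, hAXi_4 α hα, hAXi_5 α hα, hAXi_6 α hα, hAXi_7 α hα]


lemma AX_charpoly (α : ℂ) :
    (AX α).charpoly = (X - 1) ^ 2 * (X - C (α⁻¹ ^ 2)) * (X - C (α ^ 2))
      * (X + C α) ^ 2 * (X + C α⁻¹) ^ 2 := by
  rw [Matrix.charpoly_of_upperTriangular _ (by
    intro i j hij
    fin_cases i <;> fin_cases j <;> first | rfl | exact absurd hij (by decide))]
  rw [Fin.prod_univ_eight]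
  rw [show (AX α) (0 : Fin 8) (0 : Fin 8) = (α^2) from rfl]
  rw [show (AX α) (1 : Fin 8) (1 : Fin 8) = (-α) from rfl]
  rw [show (AX α) (2 : Fin 8) (2 : Fin 8) = (-α) from rfl]
  rw [show (AX α) (3 : Fin 8) (3 : Fin 8) = (1) from rfl]
  rw [show (AX α) (4 : Fin 8) (4 : Fin 8) = (1) from rfl]
  rw [show (AX α) (5 : Fin 8) (5 : Fin 8) = (-α⁻¹) from rfl]
  rw [show (AX α) (6 : Fin 8) (6 : Fin 8) = (-α⁻¹) from rfl]
  rw [show (AX α) (7 : Fin 8) (7 : Fin 8) = (α⁻¹^2) from rfl]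
  simp only [map_neg, Polynomial.C_1, map_pow]
  ring

lemma AXi_charpoly (α : ℂ) :
    (AXi α).charpoly = (X - 1) ^ 2 * (X - C (α⁻¹ ^ 2)) * (X - C (α ^ 2))
      * (X + C α) ^ 2 * (X + C α⁻¹) ^ 2 := by
  rw [Matrix.charpoly_of_upperTriangular _ (by
    intro i j hij
    fin_cases i <;> fin_cases j <;> first | rfl | exact absurd hij (by decide))]
  rw [Fin.prod_univ_eight]
  rw [show (AXi α) (0 : Fin 8) (0 : Fin 8) = (α⁻¹^2) from rfl]
  rw [show (AXi α) (1 : Fin 8) (1 : Fin 8) = (-α⁻¹) from rfl]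
  rw [show (AXi α) (2 : Fin 8) (2 : Fin 8) = (-α⁻¹) from rfl]
  rw [show (AXi α) (3 : Fin 8) (3 : Fin 8) = (1) from rfl]
  rw [show (AXi α) (4 : Fin 8) (4 : Fin 8) = (1) from rfl]
  rw [show (AXi α) (5 : Fin 8) (5 : Fin 8) = (-α) from rfl]
  rw [show (AXi α) (6 : Fin 8) (6 : Fin 8) = (-α) from rfl]
  rw [show (AXi α) (7 : Fin 8) (7 : Fin 8) = (α^2) from rfl]
  simp only [map_neg, Polynomial.C_1, map_pow]
  ring

noncomputable def Pm (α : ℂ) : Matrix (Fin 3) (Fin 3) ℂ := !![0,1,0; 1,1+α,0; 0,0,1]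
noncomputable def Pim (α : ℂ) : Matrix (Fin 3) (Fin 3) ℂ := !![-(1+α),1,0; 1,0,0; 0,0,1]
noncomputable def b1i (α : ℂ) : Matrix (Fin 3) (Fin 3) ℂ := !![-α⁻¹, α⁻¹, 0; 0,1,0; 0,0,1]
noncomputable def b2i (α : ℂ) : Matrix (Fin 3) (Fin 3) ℂ := !![1,0,0; 1,-α⁻¹,α⁻¹; 0,0,1]

lemma Pm_Pim (α : ℂ) : Pm α * Pim α = 1 := by
  ext i j
  fin_cases i <;> fin_cases j <;>
    (try simp [Pm, Pim, Matrix.mul_apply, Fin.sum_univ_three, Matrix.one_apply,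
      Matrix.vecHead, Matrix.vecTail]) <;> (try ring)

lemma Pim_Pm (α : ℂ) : Pim α * Pm α = 1 := by
  ext i j
  fin_cases i <;> fin_cases j <;>
    (try simp [Pm, Pim, Matrix.mul_apply, Fin.sum_univ_three, Matrix.one_apply,
      Matrix.vecHead, Matrix.vecTail]) <;> (try ring)

end Burau4Aux


open Burau4Aux in
/-- With `β₄` the reduced Burau representation of `B₄` evaluated at
`t = α`, the conjugation action on `𝔰𝔩₃(ℂ)` of each of
`X(α) = ρ₄(α)(σ₃σ₁⁻¹)`, `X(α)⁻¹`, `Y(α) = ρ₄(α)(σ₂σ₃σ₁⁻¹σ₂⁻¹)`, `Y(α)⁻¹`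
has characteristic polynomial `(t-1)²(t-1/α²)(t-α²)(t+α)²(t+1/α)²`. -/
theorem charpoly_conjugation_burau4
    (α : ℂ) (hα : α ≠ 0)
    (b1 b2 b3 : Matrix (Fin 3) (Fin 3) ℂ)
    (hb1 : b1 = !![-α, 1, 0; 0, 1, 0; 0, 0, 1])
    (hb2 : b2 = !![1, 0, 0; α, -α, 1; 0, 0, 1])
    (hb3 : b3 = !![1, 0, 0; 0, 1, 0; 0, α, -α])
    (X Y : Matrix (Fin 3) (Fin 3) ℂ)
    (hX : X = b3 * b1⁻¹)
    (hY : Y = b2 * b3 * b1⁻¹ * b2⁻¹)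
    (M : Matrix (Fin 3) (Fin 3) ℂ)
    (hM : M = X ∨ M = X⁻¹ ∨ M = Y ∨ M = Y⁻¹)
    (f : Module.End ℂ sl3)
    (hf : ∀ v : sl3, ((f v : Matrix (Fin 3) (Fin 3) ℂ)) = M * (v : Matrix (Fin 3) (Fin 3) ℂ) * M⁻¹) :
    f.charpoly =
      (Polynomial.X - 1) ^ 2 * (Polynomial.X - Polynomial.C (α⁻¹ ^ 2))
        * (Polynomial.X - Polynomial.C (α ^ 2))
        * (Polynomial.X + Polynomial.C α) ^ 2
        * (Polynomial.X + Polynomial.C α⁻¹) ^ 2 := by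
  
  have hb1inv : b1⁻¹ = b1i α := by
    apply inv_eq_right_inv
    rw [hb1]
    ext i j
    fin_cases i <;> fin_cases j <;>
      (try simp [b1i, Matrix.mul_apply, Fin.sum_univ_three, Matrix.one_apply,
        Matrix.vecHead, Matrix.vecTail]) <;> (try field_simp) <;> (try ring)
  have hb2b : b2 * b2i α = 1 := by
    rw [hb2]
    ext i j
    fin_cases i <;> fin_cases j <;>
      (try simp [b2i, Matrix.mul_apply, Fin.sum_univ_three, Matrix.one_apply,
        Matrix.vecHead, Matrix.vecTail]) <;> (try field_simp) <;> (try ring)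
  have hb2b' : b2i α * b2 = 1 := by
    rw [hb2]
    ext i j
    fin_cases i <;> fin_cases j <;>
      (try simp [b2i, Matrix.mul_apply, Fin.sum_univ_three, Matrix.one_apply,
        Matrix.vecHead, Matrix.vecTail]) <;> (try field_simp) <;> (try ring)
  have hb2inv : b2⁻¹ = b2i α := inv_eq_right_inv hb2b
  have hX3 : b3 * b1i α = Pm α * Tm α * Pim α := by
    rw [hb3]
    ext i j
    fin_cases i <;> fin_cases j <;>
      (try simp [b1i, Pm, Tm, Pim, Matrix.mul_apply, Fin.sum_univ_three,
        Matrix.vecHead, Matrix.vecTail]) <;> (try field_simp) <;> (try ring)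
  have hXv : X = Pm α * Tm α * Pim α := by rw [hX, hb1inv, hX3]
  have hPP := Pm_Pim α
  have hPiP := Pim_Pm α
  have hTT := Tm_Tim α hα
  have hTiT := Tim_Tm α hα
  have hQ : (b2 * Pm α) * (Pim α * b2i α) = 1 := by
    calc (b2 * Pm α) * (Pim α * b2i α)
        = b2 * ((Pm α * Pim α) * b2i α) := by simp only [Matrix.mul_assoc]
      _ = 1 := by rw [hPP, Matrix.one_mul, hb2b]
  have hQi : (Pim α * b2i α) * (b2 * Pm α) = 1 := by
    calc (Pim α * b2i α) * (b2 * Pm α)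
        = Pim α * ((b2i α * b2) * Pm α) := by simp only [Matrix.mul_assoc]
      _ = 1 := by rw [hb2b', Matrix.one_mul, hPiP]
  have hYv : Y = (b2 * Pm α) * Tm α * (Pim α * b2i α) := by
    rw [hY, hb2inv, hb1inv]
    calc b2 * b3 * b1i α * b2i α
        = b2 * ((b3 * b1i α) * b2i α) := by simp only [Matrix.mul_assoc]
      _ = b2 * (Pm α * Tm α * Pim α * b2i α) := by rw [hX3]
      _ = (b2 * Pm α) * Tm α * (Pim α * b2i α) := by simp only [Matrix.mul_assoc]
  have hXiv : X⁻¹ = Pm α * Tim α * Pim α := by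
    apply inv_eq_right_inv
    rw [hXv]
    calc Pm α * Tm α * Pim α * (Pm α * Tim α * Pim α)
        = Pm α * (Tm α * ((Pim α * Pm α) * (Tim α * Pim α))) := by
          simp only [Matrix.mul_assoc]
      _ = 1 := by
          rw [hPiP, Matrix.one_mul, ← Matrix.mul_assoc (Tm α), hTT, Matrix.one_mul, hPP]
  have hYiv : Y⁻¹ = (b2 * Pm α) * Tim α * (Pim α * b2i α) := by
    apply inv_eq_right_inv
    rw [hYv]
    calc (b2 * Pm α) * Tm α * (Pim α * b2i α) * ((b2 * Pm α) * Tim α * (Pim α * b2i α))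
        = (b2 * Pm α) * (Tm α * (((Pim α * b2i α) * (b2 * Pm α)) * (Tim α * (Pim α * b2i α)))) := by
          simp only [Matrix.mul_assoc]
      _ = 1 := by
          rw [hQi, Matrix.one_mul, ← Matrix.mul_assoc (Tm α), hTT, Matrix.one_mul, hQ]
  rcases hM with h | h | h | h
  · rw [key (Pm α) (Pim α) (Tm α) (Tim α) M hPP hPiP hTT (h.trans hXv) f hf
      (AX α) (hAX α hα), AX_charpoly]
  · rw [key (Pm α) (Pim α) (Tim α) (Tm α) M hPP hPiP hTiT (h.trans hXiv) f hf
      (AXi α) (hAXi α hα), AXi_charpoly]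
  · rw [key (b2 * Pm α) (Pim α * b2i α) (Tm α) (Tim α) M hQ hQi hTT (h.trans hYv) f hf
      (AX α) (hAX α hα), AX_charpoly]
  · rw [key (b2 * Pm α) (Pim α * b2i α) (Tim α) (Tm α) M hQ hQi hTiT (h.trans hYiv) f hf
      (AXi α) (hAXi α hα), AXi_charpoly]
end

section
/- Let σ ∈ GL₃(ℂ) be given (in some basis) by the matrix S₁ = [[-a, 2, 1],[0,1,1],[0,0,-1/a]] and τ by S₂ = [[-1/a,0,0],[-1,1,0],[1,-2,-a]] for a nonzero complex number a. Then S₁S₂S₁ = S₂S₁S₂, i.e., these matrices define a representation of the braid group B₃ sending σ₁ ↦ S₁ and σ₂ ↦ S₂; moreover the eigenvalues of S₁ (and of S₂) are -a, 1, -1/a. -/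
open Matrix Polynomial

/-- The matrices `S₁ = [[-a,2,1],[0,1,1],[0,0,-1/a]]` and
`S₂ = [[-1/a,0,0],[-1,1,0],[1,-2,-a]]` satisfy the braid relation
`S₁S₂S₁ = S₂S₁S₂` (so they define a representation of `B₃`), and each has
eigenvalues `-a, 1, -1/a`: the characteristic polynomial of each is
`(X + a)(X - 1)(X + 1/a)`. -/
theorem tuba_wenzl_braid_relation
    (a : ℂ) (ha : a ≠ 0)
    (S₁ S₂ : Matrix (Fin 3) (Fin 3) ℂ)
    (hS₁ : S₁ = !![-a, 2, 1; 0, 1, 1; 0, 0, -a⁻¹])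
    (hS₂ : S₂ = !![-a⁻¹, 0, 0; -1, 1, 0; 1, -2, -a]) :
    S₁ * S₂ * S₁ = S₂ * S₁ * S₂ ∧
    S₁.charpoly = (X + Polynomial.C a) * (X - 1) * (X + Polynomial.C a⁻¹) ∧
    S₂.charpoly = (X + Polynomial.C a) * (X - 1) * (X + Polynomial.C a⁻¹) := by
  subst hS₁ hS₂
  refine ⟨?_, ?_, ?_⟩
  · ext i j
    fin_cases i <;> fin_cases j <;>
      · simp [Matrix.mul_apply, Fin.sum_univ_succ]
        try field_simp
        try ring
  · have h : (Polynomial.C a : ℂ[X]) * Polynomial.C a⁻¹ = 1 := by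
      rw [← Polynomial.C_mul, mul_inv_cancel₀ ha, Polynomial.C_1]
    rw [Matrix.charpoly, Matrix.det_fin_three]
    simp [Matrix.charmatrix_apply, Matrix.vecHead, Matrix.vecTail]
    all_goals first | linear_combination (1 - X) * h | ring
  · have h : (Polynomial.C a : ℂ[X]) * Polynomial.C a⁻¹ = 1 := by
      rw [← Polynomial.C_mul, mul_inv_cancel₀ ha, Polynomial.C_1]
    rw [Matrix.charpoly, Matrix.det_fin_three]
    simp [Matrix.charmatrix_apply, Matrix.vecHead, Matrix.vecTail]
    all_goals first | linear_combination (1 - X) * h | ring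
end
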